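/- Let R be a commutative local ring and C the mod-𝔪 evaluation of C_R, where all Hom-spaces of C_R are finitely generated free R-modules. If X is a retract of Y in C — i.e. there exist ᾱ ∈ Hom_C(X,Y) and β̄ ∈ Hom_C(Y,X) with β̄∘ᾱ = id_X — then X is a retract of Y in C_R. Consequently, for every thick ideal I of C_R, the same class of objects is a thick ideal of the evaluation category C. -/

import Mathlib

/-!
STATEMENT 16. Let `R` be a commutative local ring and `C` the mod-`𝔪` evaluation
of `C_R`, where all Hom-spaces of `C_R` are finitely generated free `R`-modules.
If `X` is a retract of `Y` in `C` — i.e. there exist `ᾱ ∈ Hom_C(X,Y)` and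
`β̄ ∈ Hom_C(Y,X)` with `β̄∘ᾱ = id_X` — then `X` is a retract of `Y` in `C_R`.
Consequently, for every thick ideal `I` of `C_R`, the same class of objects is a
thick ideal of the evaluation category `C`.

Encoding: morphisms of `C` are classes of morphisms of `C_R` modulo `𝔪·Hom`, so a
retract of `Y` in `C` is given by lifts `α : X ⟶ Y`, `β : Y ⟶ X` with
`α ≫ β − 𝟙 X ∈ 𝔪·End(X)`; thickness of `I` in `C` amounts to the same tensor
closure together with closure under retracts in `C`.
-/

open CategoryTheory MonoidalCategory

/-- A rigid spherical monoidal `R`-linear category, encoded through its spherical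
trace functions on endomorphisms and their standard properties. -/
structure SphericalTraceData (R : Type*) [CommRing R] (C : Type*) [Category C]
    [MonoidalCategory C] [Preadditive C] [Linear R C] where
  /-- the spherical trace of an endomorphism, an `R`-linear function -/
  tr : ∀ X : C, (X ⟶ X) →ₗ[R] R
  /-- cyclicity of the trace -/
  tr_comm : ∀ {X Y : C} (f : X ⟶ Y) (g : Y ⟶ X), tr X (f ≫ g) = tr Y (g ≫ f)
  /-- `End (𝟙_ C) = R` -/
  tr_unit : ∀ f : 𝟙_ C ⟶ 𝟙_ C, f = tr (𝟙_ C) f • 𝟙 (𝟙_ C)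
  /-- multiplicativity of the trace on tensor products -/
  tr_tensor : ∀ {X Y : C} (a : X ⟶ X) (b : Y ⟶ Y),
      tr (X ⊗ Y) (a ⊗ₘ b) = tr X a * tr Y b
  /-- the partial trace (conditional expectation) onto the first factor -/
  E : ∀ X Y : C, (X ⊗ Y ⟶ X ⊗ Y) →ₗ[R] (X ⟶ X)
  tr_E : ∀ {X Y : C} (a : X ⊗ Y ⟶ X ⊗ Y), tr X (E X Y a) = tr (X ⊗ Y) a
  /-- the partial trace (conditional expectation) onto the second factor -/
  E' : ∀ X Y : C, (X ⊗ Y ⟶ X ⊗ Y) →ₗ[R] (Y ⟶ Y)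
  tr_E' : ∀ {X Y : C} (a : X ⊗ Y ⟶ X ⊗ Y), tr Y (E' X Y a) = tr (X ⊗ Y) a
  /-- rigidity/sphericality: a trace against a tensor product morphism `f ⊗ g`
  can be rewritten as a trace against `f` alone (Barrett–Westbury) -/
  tensorHom_trace_right : ∀ {X Y W Z : C} (f : X ⟶ Y) (g : W ⟶ Z) (h : Y ⊗ Z ⟶ X ⊗ W),
      ∃ h' : Y ⟶ X, tr (X ⊗ W) ((f ⊗ₘ g) ≫ h) = tr X (f ≫ h')
  tensorHom_trace_left : ∀ {X Y W Z : C} (f : X ⟶ Y) (g : W ⟶ Z) (h : Z ⊗ Y ⟶ W ⊗ X),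
      ∃ h' : Y ⟶ X, tr (W ⊗ X) ((g ⊗ₘ f) ≫ h) = tr X (f ≫ h')

/-- A thick (tensor) ideal of a monoidal category: a class of objects closed under
tensoring with arbitrary objects on either side and under retracts. -/
structure IsThickIdeal {C : Type*} [Category C] [MonoidalCategory C] (I : Set C) : Prop where
  tensor_right : ∀ X ∈ I, ∀ Y : C, X ⊗ Y ∈ I
  tensor_left : ∀ X ∈ I, ∀ Y : C, Y ⊗ X ∈ I
  retract : ∀ {X Y : C}, Y ∈ I → ∀ (α : X ⟶ Y) (β : Y ⟶ X), α ≫ β = 𝟙 X → X ∈ I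

variable {R : Type*} [CommRing R] {C : Type*} [Category C] [MonoidalCategory C]
  [Preadditive C] [Linear R C]

/-- An object `X` is `I`-negligible if `Tr_X a ∈ I` for every endomorphism `a` of `X`. -/
def IsNegligibleObj (Θ : SphericalTraceData R C) (I : Ideal R) (X : C) : Prop :=
  ∀ a : X ⟶ X, Θ.tr X a ∈ I


/-- Nakayama: an `R`-endomorphism of a finite module over a local ring that is
congruent to the identity mod `𝔪` is surjective. -/
theorem surj_of_sub_id_mem_smul {R : Type*} [CommRing R] [IsLocalRing R] {M : Type*}
    [AddCommGroup M] [Module R M] [Module.Finite R M] (f : M →ₗ[R] M)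
    (h : ∀ y : M, f y - y ∈ (IsLocalRing.maximalIdeal R • ⊤ : Submodule R M)) :
    Function.Surjective f := by
  set P := LinearMap.range f with hPdef
  have hq : (⊤ : Submodule R (M ⧸ P)) = ⊥ := by
    apply Submodule.eq_bot_of_le_smul_of_le_jacobson_bot (IsLocalRing.maximalIdeal R)
    · exact Module.Finite.fg_top
    · intro z _
      obtain ⟨y, rfl⟩ := P.mkQ_surjective z
      have h1 : P.mkQ y = - P.mkQ (f y - y) := by
        have : P.mkQ (f y) = 0 := (Submodule.Quotient.mk_eq_zero P).mpr (LinearMap.mem_range_self f y)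
        rw [map_sub, this]; abel
      rw [h1]
      refine neg_mem ?_
      have h2 : P.mkQ (f y - y) ∈ (IsLocalRing.maximalIdeal R • ⊤ : Submodule R M).map P.mkQ :=
        Submodule.mem_map_of_mem (h y)
      rw [Submodule.map_smul''] at h2
      exact Submodule.smul_mono le_rfl le_top h2
    · exact IsLocalRing.maximalIdeal_le_jacobson ⊥
  have hsub : Subsingleton (M ⧸ P) := by
    constructor
    intro a b
    have ha : a ∈ (⊥ : Submodule R (M ⧸ P)) := hq ▸ Submodule.mem_top
    have hb : b ∈ (⊥ : Submodule R (M ⧸ P)) := hq ▸ Submodule.mem_top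
    rw [Submodule.mem_bot] at ha hb
    rw [ha, hb]
  have : P = ⊤ := (Submodule.Quotient.subsingleton_iff (p := P)).mp hsub
  rw [← LinearMap.range_eq_top]
  exact this

theorem retract_lifts_and_thick_ideals_descend
    [IsLocalRing R]
    (hfree : ∀ X Y : C, Module.Free R (X ⟶ Y))
    (hfin : ∀ X Y : C, Module.Finite R (X ⟶ Y)) :
    -- a retract in the evaluation category `C` lifts to a retract in `C_R`
    (∀ (X Y : C) (α : X ⟶ Y) (β : Y ⟶ X),
        α ≫ β - 𝟙 X ∈ (IsLocalRing.maximalIdeal R • ⊤ : Submodule R (X ⟶ X)) →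
          ∃ (α' : X ⟶ Y) (β' : Y ⟶ X), α' ≫ β' = 𝟙 X) ∧
    -- consequently every thick ideal of `C_R` is also a thick ideal of `C`:
    -- it is closed under retracts taken in `C`
    (∀ I : Set C, IsThickIdeal I →
        ∀ (X Y : C), Y ∈ I →
          (∃ (α : X ⟶ Y) (β : Y ⟶ X),
              α ≫ β - 𝟙 X ∈ (IsLocalRing.maximalIdeal R • ⊤ : Submodule R (X ⟶ X))) →
            X ∈ I) := by
  have part1 : ∀ (X Y : C) (α : X ⟶ Y) (β : Y ⟶ X),
      α ≫ β - 𝟙 X ∈ (IsLocalRing.maximalIdeal R • ⊤ : Submodule R (X ⟶ X)) →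
        ∃ (α' : X ⟶ Y) (β' : Y ⟶ X), α' ≫ β' = 𝟙 X := by
    intro X Y α β hmem
    set e : X ⟶ X := α ≫ β with he
    haveI := hfin X X
    set f : (X ⟶ X) →ₗ[R] (X ⟶ X) := Linear.leftComp R X e with hf
    have hsurj : Function.Surjective f := by
      apply surj_of_sub_id_mem_smul
      intro y
      have h1 : f y - y = (Linear.rightComp R X y) (e - 𝟙 X) := by
        simp [hf, Linear.leftComp, Linear.rightComp, Preadditive.sub_comp]
      rw [h1]
      have h2 : (Linear.rightComp R X y) (e - 𝟙 X) ∈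
          (IsLocalRing.maximalIdeal R • ⊤ : Submodule R (X ⟶ X)).map (Linear.rightComp R X y) :=
        Submodule.mem_map_of_mem hmem
      rw [Submodule.map_smul''] at h2
      exact Submodule.smul_mono le_rfl le_top h2
    obtain ⟨w, hw⟩ := hsurj (𝟙 X)
    refine ⟨α, β ≫ w, ?_⟩
    have : e ≫ w = 𝟙 X := hw
    rw [← Category.assoc, ← he, this]
  refine ⟨part1, ?_⟩
  intro I hI X Y hY ⟨α, β, hmem⟩
  obtain ⟨α', β', hret⟩ := part1 X Y α β hmem
  exact hI.retract hY α' β' hret
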